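/- Under the assumption that the single-layer operator S : H^{−1/2}(C_R) → H^{1/2}_0(C_R) is injective (which follows from uniqueness in D_R and Σ_R): if S φ = 0 then the associated single-layer potential u vanishes in all of D and consequently the density φ = 0. -/

import Mathlib

open MeasureTheory Complex Real Filter ComplexConjugate

noncomputable section

/-- Partial derivative in the `x₁`-direction. -/
def d1 (u : ℝ × ℝ → ℂ) (x : ℝ × ℝ) : ℂ := fderiv ℝ u x (1, 0)

/-- Partial derivative in the `x₂`-direction. -/
def d2 (u : ℝ × ℝ → ℂ) (x : ℝ × ℝ) : ℂ := fderiv ℝ u x (0, 1)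

/-- Laplacian of a complex-valued function on `ℝ²`. -/
def lap (u : ℝ × ℝ → ℂ) (x : ℝ × ℝ) : ℂ := d1 (d1 u) x + d2 (d2 u) x

/-- The (Euclidean) distance from `x` to the point `(π, 0)`. -/
def dist2 (x : ℝ × ℝ) : ℝ := Real.sqrt ((x.1 - π) ^ 2 + x.2 ^ 2)

/-- `∇v · conj ∇ψ`. -/
def gradDot (v ψ : ℝ × ℝ → ℂ) (x : ℝ × ℝ) : ℂ :=
  d1 v x * conj (d1 ψ x) + d2 v x * conj (d2 ψ x)

/-- Membership in (a proxy for) the Sobolev space `H¹(D)`: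
the function and its (full) derivative are square integrable on `D`. -/
def MemH1 (D : Set (ℝ × ℝ)) (u : ℝ × ℝ → ℂ) : Prop :=
  MemLp u 2 (volume.restrict D) ∧ MemLp (fun x => fderiv ℝ u x) 2 (volume.restrict D)

/-- Squared `H¹(D)`-norm. -/
def H1normSq (D : Set (ℝ × ℝ)) (u : ℝ × ℝ → ℂ) : ℝ :=
  ((eLpNorm u 2 (volume.restrict D)).toReal) ^ 2
    + ((eLpNorm (fun x => fderiv ℝ u x) 2 (volume.restrict D)).toReal) ^ 2

/-- Exponential weight `e^{ρ|x|}`. -/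
def w (ρ : ℝ) (x : ℝ × ℝ) : ℝ := Real.exp (ρ * Real.sqrt (x.1 ^ 2 + x.2 ^ 2))

/-- The square-root branch holomorphic in `ℂ ∖ (i·ℝ≤0)`, applied to a real number:
`√t = i √|t|` for `t < 0`. -/
def sqrtBranch (t : ℝ) : ℂ :=
  if 0 ≤ t then ((Real.sqrt t : ℝ) : ℂ) else I * ((Real.sqrt (-t) : ℝ) : ℂ)

/-- Radial derivative `∂v/∂r` with respect to the center `(π,0)`. -/
def rDeriv (v : ℝ × ℝ → ℂ) (x : ℝ × ℝ) : ℂ :=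
  fderiv ℝ v x ((x.1 - π) / dist2 x, x.2 / dist2 x)

/-- injectivity of the single-layer operator. Suppose `k²` is not a
Dirichlet eigenvalue of `-Δ` in `D_R` (interior uniqueness) and the exterior problem in
`Σ_R` with the open waveguide radiation condition `RC` has only the trivial solution.
If the single-layer potential `u` with density `φ` vanishes on `C_R` (`Sφ = 0`), then `u`
vanishes in all of `D` and consequently `φ = 0`. -/
theorem statement12 {G : Type*} [NormedAddCommGroup G] [NormedSpace ℂ G]
    (k R : ℝ) (hR : π < R)
    (D : Set (ℝ × ℝ)) (hDopen : IsOpen D)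
    (RC : (ℝ × ℝ → ℂ) → Prop)     -- the open waveguide radiation condition
    (Tr : (ℝ × ℝ → ℂ) → G)        -- trace onto `H^{1/2}₀(C_R)`
    -- traces of compactly supported `H¹₀(D)`-functions exhaust `G`
    (hTr_surj : ∀ g : G, ∃ ψ : ℝ × ℝ → ℂ, MemH1 D ψ ∧ (∀ x ∈ frontier D, ψ x = 0) ∧
      HasCompactSupport ψ ∧ Tr ψ = g)
    -- interior uniqueness: `k²` is not a Dirichlet eigenvalue of `-Δ` in `D_R`
    (hint : ∀ w : ℝ × ℝ → ℂ, MemH1 {x ∈ D | dist2 x < R} w →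
      (∀ x ∈ {x ∈ D | dist2 x < R}, lap w x + (k : ℂ) ^ 2 * w x = 0) →
      (∀ x ∈ frontier {x ∈ D | dist2 x < R}, w x = 0) →
      ∀ x ∈ {x ∈ D | dist2 x < R}, w x = 0)
    -- exterior uniqueness: no bound states in `Σ_R` under the radiation condition
    (hext : ∀ w : ℝ × ℝ → ℂ, RC w →
      (∀ x ∈ {x ∈ D | R < dist2 x}, lap w x + (k : ℂ) ^ 2 * w x = 0) →
      (∀ x ∈ frontier {x ∈ D | R < dist2 x}, w x = 0) →
      ∀ x ∈ {x ∈ D | R < dist2 x}, w x = 0)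
    (φ : G →L[ℂ] ℂ)               -- the density `φ ∈ H^{-1/2}(C_R)`
    (u : ℝ × ℝ → ℂ)
    (huRC : RC u)
    (huH1 : ∀ h : ℝ, MemH1 {x ∈ D | x.2 < h} u)
    (hubc : ∀ x ∈ frontier D, u x = 0)
    (huhelm : ∀ x ∈ D, dist2 x ≠ R → lap u x + (k : ℂ) ^ 2 * u x = 0)
    -- `u` is the single-layer potential with density `φ`
    (hvar : ∀ ψ : ℝ × ℝ → ℂ, MemH1 D ψ → (∀ x ∈ frontier D, ψ x = 0) →
      HasCompactSupport ψ →
      (∫ x in D, (gradDot u ψ x - (k : ℂ) ^ 2 * u x * conj (ψ x))) = φ (Tr ψ))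
    -- `S φ = u|_{C_R} = 0`
    (hS0 : ∀ x ∈ D, dist2 x = R → u x = 0) :
    (∀ x ∈ D, u x = 0) ∧ φ = 0 := by
  have hdist2_cont : Continuous dist2 := by
    exact Real.continuous_sqrt.comp
      (((continuous_fst.sub continuous_const).pow 2).add (continuous_snd.pow 2))
  -- interior vanishing
  have hBopen : IsOpen {x : ℝ × ℝ | dist2 x < R} :=
    isOpen_lt hdist2_cont continuous_const
  have hB'open : IsOpen {x : ℝ × ℝ | R < dist2 x} :=
    isOpen_lt continuous_const hdist2_cont
  have hIntOpen : IsOpen {x ∈ D | dist2 x < R} := by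
    have : {x ∈ D | dist2 x < R} = D ∩ {x | dist2 x < R} := rfl
    rw [this]; exact hDopen.inter hBopen
  have hExtOpen : IsOpen {x ∈ D | R < dist2 x} := by
    have : {x ∈ D | R < dist2 x} = D ∩ {x | R < dist2 x} := rfl
    rw [this]; exact hDopen.inter hB'open
  have hint0 : ∀ x ∈ {x ∈ D | dist2 x < R}, u x = 0 := by
    apply hint u
    · constructor
      · refine (huH1 (R + 1)).1.mono_measure (Measure.restrict_mono ?_ le_rfl)
        intro x hx
        refine ⟨hx.1, ?_⟩
        have h1 : x.2 ≤ Real.sqrt (x.2 ^ 2) := by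
          rw [Real.sqrt_sq_eq_abs]; exact le_abs_self _
        have h2 : Real.sqrt (x.2 ^ 2) ≤ dist2 x := by
          apply Real.sqrt_le_sqrt; nlinarith [sq_nonneg (x.1 - π)]
        have := hx.2
        linarith
      · refine (huH1 (R + 1)).2.mono_measure (Measure.restrict_mono ?_ le_rfl)
        intro x hx
        refine ⟨hx.1, ?_⟩
        have h1 : x.2 ≤ Real.sqrt (x.2 ^ 2) := by
          rw [Real.sqrt_sq_eq_abs]; exact le_abs_self _
        have h2 : Real.sqrt (x.2 ^ 2) ≤ dist2 x := by
          apply Real.sqrt_le_sqrt; nlinarith [sq_nonneg (x.1 - π)]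
        have := hx.2
        linarith
    · exact fun x hx => huhelm x hx.1 (ne_of_lt hx.2)
    · intro x hx
      have hxc : x ∈ closure {x ∈ D | dist2 x < R} := hx.1
      have hxn : x ∉ {x ∈ D | dist2 x < R} := by
        rw [← hIntOpen.interior_eq]; exact hx.2
      by_cases hxD : x ∈ D
      · have hle : dist2 x ≤ R := by
          have : closure {x ∈ D | dist2 x < R} ⊆ {x | dist2 x ≤ R} := by
            apply closure_minimal
            · exact fun y hy => le_of_lt hy.2
            · exact isClosed_le hdist2_cont continuous_const
          exact this hxc
        have : ¬ dist2 x < R := fun h => hxn ⟨hxD, h⟩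
        exact hS0 x hxD (le_antisymm hle (not_lt.mp this))
      · apply hubc
        constructor
        · exact closure_mono (fun y hy => hy.1) hxc
        · rw [hDopen.interior_eq]; exact hxD
  have hext0 : ∀ x ∈ {x ∈ D | R < dist2 x}, u x = 0 := by
    apply hext u huRC
    · exact fun x hx => huhelm x hx.1 (ne_of_gt hx.2)
    · intro x hx
      have hxc : x ∈ closure {x ∈ D | R < dist2 x} := hx.1
      have hxn : x ∉ {x ∈ D | R < dist2 x} := by
        rw [← hExtOpen.interior_eq]; exact hx.2
      by_cases hxD : x ∈ D
      · have hle : R ≤ dist2 x := by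
          have : closure {x ∈ D | R < dist2 x} ⊆ {x | R ≤ dist2 x} := by
            apply closure_minimal
            · exact fun y hy => le_of_lt hy.2
            · exact isClosed_le continuous_const hdist2_cont
          exact this hxc
        have : ¬ R < dist2 x := fun h => hxn ⟨hxD, h⟩
        exact hS0 x hxD (le_antisymm (not_lt.mp this) hle)
      · apply hubc
        constructor
        · exact closure_mono (fun y hy => hy.1) hxc
        · rw [hDopen.interior_eq]; exact hxD
  have huz : ∀ x ∈ D, u x = 0 := by
    intro x hx
    rcases lt_trichotomy (dist2 x) R with h | h | h
    · exact hint0 x ⟨hx, h⟩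
    · exact hS0 x hx h
    · exact hext0 x ⟨hx, h⟩
  refine ⟨huz, ?_⟩
  have hfd : ∀ x ∈ D, fderiv ℝ u x = 0 := by
    intro x hx
    have heq : u =ᶠ[nhds x] (fun _ => (0 : ℂ)) :=
      Filter.eventually_of_mem (hDopen.mem_nhds hx) (fun y hy => huz y hy)
    rw [heq.fderiv_eq, fderiv_fun_const]
    rfl
  ext g
  obtain ⟨ψ, hψH1, hψbc, hψcs, hψTr⟩ := hTr_surj g
  have := hvar ψ hψH1 hψbc hψcs
  rw [hψTr] at this
  have hzero : (∫ x in D, (gradDot u ψ x - (k : ℂ) ^ 2 * u x * conj (ψ x))) = 0 := by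
    rw [setIntegral_congr_fun hDopen.measurableSet
      (g := fun _ => (0 : ℂ)) (fun x hx => ?_), integral_zero]
    simp only [gradDot, d1, d2, hfd x hx, huz x hx,
      ContinuousLinearMap.zero_apply, zero_mul, mul_zero, add_zero, sub_zero]
  simp [← this, hzero]
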